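/- Let $a > 0$, $b \in \mathbb{R}$, $\tau = b + ia$, and let $u, v \in \mathbb{C}$. Then the following identity of absolutely convergent double series holds: $\sum_{m,n \in \mathbb{Z}} e^{-\frac{\pi}{2a}(n^2\tau\bar\tau + m^2 + 2\tau mn)} e^{-\frac{\pi}{a}(m+n\bar\tau)u} e^{\frac{\pi}{a}(m+n\tau)v} e^{-\frac{\pi}{2a}u^2} e^{\frac{\pi}{a}uv} e^{-\frac{\pi}{2a}v^2} = \sqrt{2a}\, \Big(\sum_{k \in \mathbb{Z}} e^{\pi i \tau k^2} e^{2\pi i k u}\Big)\Big(\sum_{l \in \mathbb{Z}} e^{-\pi i \bar\tau l^2} e^{2\pi i l v}\Big).$ -/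

import Mathlib

open Complex

lemma my_summable_norm_jtt (z τ : ℂ) (h : 0 < τ.im) :
    Summable fun n : ℤ => ‖jacobiTheta₂_term n z τ‖ :=
  (summable_pow_mul_jacobiTheta₂_term_bound |z.im| h 0).of_nonneg_of_le
    (fun _ => norm_nonneg _)
    (fun n => by simpa using norm_jacobiTheta₂_term_le h le_rfl le_rfl n)

lemma my_summable_exp_quadratic {c : ℝ} (hc : 0 < c) (p q : ℝ) :
    Summable fun n : ℤ => Real.exp (-c * (n : ℝ) ^ 2 + p * n + q) := by
  have hπ := Real.pi_pos
  have h := my_summable_norm_jtt (((-p / (2 * Real.pi) : ℝ)) * Complex.I)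
    (((c / Real.pi : ℝ)) * Complex.I) (by simpa using div_pos hc hπ)
  refine (h.mul_left (Real.exp q)).congr fun n => ?_
  rw [norm_jacobiTheta₂_term, ← Real.exp_add]
  simp only [Complex.mul_im, Complex.ofReal_re, Complex.I_im, Complex.ofReal_im,
    Complex.I_re, mul_zero, zero_mul, mul_one, add_zero, zero_add]
  congr 1
  field_simp
  ring

lemma my_summable_gauss {c : ℝ} (hc : 0 < c) (x : ℝ) :
    Summable fun n : ℤ => Real.exp (-c * ((n : ℝ) + x) ^ 2) := by
  refine (my_summable_exp_quadratic hc (-2 * c * x) (-c * x ^ 2)).congr fun n => ?_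
  congr 1; ring

/-- Norm of a shifted complex Gaussian term times another exponential. -/
lemma my_norm_exp_sq (a : ℝ) (w : ℂ) (m : ℤ) (X : ℂ) :
    ‖Complex.exp (-((Real.pi : ℂ) / (2 * (a:ℂ))) * ((m : ℂ) + w) ^ 2) * Complex.exp X‖
      = Real.exp (X.re + Real.pi / (2 * a) * w.im ^ 2) *
        Real.exp (-(Real.pi / (2 * a)) * ((m : ℝ) + w.re) ^ 2) := by
  rw [norm_mul, Complex.norm_exp, Complex.norm_exp,
    ← Real.exp_add, ← Real.exp_add]
  congr 1
  have hco : -((Real.pi:ℂ) / (2 * (a:ℂ))) = ((-(Real.pi / (2 * a)) : ℝ) : ℂ) := by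
    push_cast; ring
  rw [hco, Complex.re_ofReal_mul]
  have hre : ((((m:ℂ)) + w) ^ 2).re = ((m : ℝ) + w.re) ^ 2 - w.im ^ 2 := by
    rw [pow_two, Complex.mul_re]
    simp only [Complex.add_re, Complex.add_im, Complex.intCast_re, Complex.intCast_im]
    ring
  rw [hre]
  ring

lemma my_norm_exp_quad (a x : ℝ) (k : ℤ) :
    ‖Complex.exp (-(Real.pi:ℂ) * (2 * (a:ℂ)) * (k:ℂ)^2 +
        2 * (Real.pi:ℂ) * (-Complex.I * (x:ℂ)) * (k:ℂ))‖
      = Real.exp (-(2 * Real.pi * a) * (k:ℝ)^2) := by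
  rw [Complex.norm_exp]
  congr 1
  have : -(Real.pi:ℂ) * (2 * (a:ℂ)) * (k:ℂ)^2 + 2 * (Real.pi:ℂ) * (-Complex.I * (x:ℂ)) * (k:ℂ)
      = (((-(2 * Real.pi * a) * (k:ℝ)^2 : ℝ)) : ℂ) + (((-2 * Real.pi * x * k : ℝ)) : ℂ) * Complex.I := by
    push_cast; ring
  rw [this, Complex.add_re, Complex.ofReal_re, Complex.re_ofReal_mul, Complex.I_re,
    mul_zero, add_zero]

def zzEquiv : ℤ × ℤ ≃ ℤ × ℤ where
  toFun p := (p.2 + p.1, -p.1)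
  invFun q := (-q.2, q.1 + q.2)
  left_inv p := by simp [Prod.ext_iff]
  right_inv q := by simp [Prod.ext_iff]


/-- The Gaussian double-sum term appearing in the Floer product on the twisted
doubling torus. -/
noncomputable def doubleThetaTerm (a : ℝ) (τ u v : ℂ) (m n : ℤ) : ℂ :=
  Complex.exp (-((Real.pi : ℂ) / (2 * (a : ℂ))) *
      ((n : ℂ) ^ 2 * τ * (starRingEnd ℂ) τ + (m : ℂ) ^ 2 + 2 * τ * (m : ℂ) * (n : ℂ))) *
  Complex.exp (-((Real.pi : ℂ) / (a : ℂ)) * ((m : ℂ) + (n : ℂ) * (starRingEnd ℂ) τ) * u) *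
  Complex.exp (((Real.pi : ℂ) / (a : ℂ)) * ((m : ℂ) + (n : ℂ) * τ) * v) *
  Complex.exp (-((Real.pi : ℂ) / (2 * (a : ℂ))) * u ^ 2) *
  Complex.exp (((Real.pi : ℂ) / (a : ℂ)) * u * v) *
  Complex.exp (-((Real.pi : ℂ) / (2 * (a : ℂ))) * v ^ 2)

set_option maxHeartbeats 2000000 in
/-- the theta identity relating the Gaussian double sum on the
doubling torus to `√(2a)·ϑ(u;τ)·ϑ(v;-τ̄)`, all series converging absolutely. -/
theorem double_theta_identity
    (a b : ℝ) (ha : 0 < a) (τ : ℂ) (hτ : τ = (b : ℂ) + (a : ℂ) * Complex.I)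
    (u v : ℂ) :
    Summable (fun p : ℤ × ℤ => doubleThetaTerm a τ u v p.1 p.2) ∧
    Summable (fun k : ℤ => Complex.exp (Real.pi * Complex.I * τ * (k : ℂ) ^ 2) *
      Complex.exp (2 * Real.pi * Complex.I * (k : ℂ) * u)) ∧
    Summable (fun l : ℤ =>
      Complex.exp (-(Real.pi * Complex.I * (starRingEnd ℂ) τ * (l : ℂ) ^ 2)) *
        Complex.exp (2 * Real.pi * Complex.I * (l : ℂ) * v)) ∧
    (∑' p : ℤ × ℤ, doubleThetaTerm a τ u v p.1 p.2)
      = (Real.sqrt (2 * a) : ℂ) *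
        (∑' k : ℤ, Complex.exp (Real.pi * Complex.I * τ * (k : ℂ) ^ 2) *
          Complex.exp (2 * Real.pi * Complex.I * (k : ℂ) * u)) *
        (∑' l : ℤ,
          Complex.exp (-(Real.pi * Complex.I * (starRingEnd ℂ) τ * (l : ℂ) ^ 2)) *
            Complex.exp (2 * Real.pi * Complex.I * (l : ℂ) * v)) := by
  have hπ := Real.pi_pos
  have h2a : (0:ℝ) < 2 * a := by linarith
  have ha0 : (a:ℂ) ≠ 0 := Complex.ofReal_ne_zero.mpr ha.ne'
  set σ : ℂ := (starRingEnd ℂ) τ with hσdef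
  have hσ : σ = (b : ℂ) - (a : ℂ) * Complex.I := by
    rw [hσdef, hτ, map_add, map_mul, Complex.conj_ofReal, Complex.conj_ofReal, Complex.conj_I]
    ring
  have hτσ : τ = σ + 2 * (a:ℂ) * Complex.I := by rw [hσ, hτ]; ring
  have hσim : σ.im = -a := by rw [hσ]; simp
  have hτim : τ.im = a := by rw [hτ]; simp
  set c : ℤ → ℂ := fun n => (n : ℂ) * σ + u - v with hc
  set L : ℤ → ℂ := fun n =>
    -(Real.pi : ℂ) * Complex.I * σ * (n : ℂ) ^ 2 + 2 * (Real.pi : ℂ) * Complex.I * (n : ℂ) * v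
    with hL
  set F : ℤ → ℂ := fun k => Complex.exp (Real.pi * Complex.I * τ * (k : ℂ) ^ 2) *
      Complex.exp (2 * Real.pi * Complex.I * (k : ℂ) * u) with hF
  set H : ℤ → ℂ := fun l => Complex.exp (-(Real.pi * Complex.I * σ * (l : ℂ) ^ 2)) *
      Complex.exp (2 * Real.pi * Complex.I * (l : ℂ) * v) with hH
  -- step 1: the term identity
  have id1 : ∀ m n : ℤ, doubleThetaTerm a τ u v m n
      = Complex.exp (-((Real.pi : ℂ) / (2 * (a:ℂ))) * ((m : ℂ) + c n) ^ 2) *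
        Complex.exp (L n) := by
    intro m n
    have key : ∀ X Y : ℂ, X = Y + ((-(m * n) : ℤ) : ℂ) * (2 * (Real.pi : ℂ) * Complex.I) →
        Complex.exp X = Complex.exp Y := by
      intro X Y h
      rw [h, Complex.exp_add, Complex.exp_int_mul_two_pi_mul_I, mul_one]
    simp only [doubleThetaTerm, ← hσdef, hc, hL, ← Complex.exp_add]
    apply key
    rw [hτσ]
    set t : ℂ := (Real.pi : ℂ) / (2 * (a:ℂ)) with htdef
    have e2 : (Real.pi : ℂ) / (a:ℂ) = 2 * t := by rw [htdef]; field_simp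
    have e3 : (Real.pi : ℂ) = t * (2 * (a:ℂ)) := by rw [htdef]; field_simp
    rw [e2, e3]
    push_cast
    ring
  -- step 2: Poisson summation for the inner Gaussian sum
  have hpow : (2 * (a:ℂ)) ^ (1 / 2 : ℂ) = ((Real.sqrt (2 * a) : ℝ) : ℂ) := by
    rw [show (2 * (a:ℂ)) = (((2 * a : ℝ)) : ℂ) by push_cast; ring,
      show ((1:ℂ)/2) = (((1/2 : ℝ)) : ℂ) by norm_num, ← Complex.ofReal_cpow h2a.le,
      Real.sqrt_eq_rpow]
  have hsqrt0 : ((Real.sqrt (2 * a) : ℝ) : ℂ) ≠ 0 :=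
    Complex.ofReal_ne_zero.mpr (Real.sqrt_pos.mpr h2a).ne'
  have poisson : ∀ w : ℂ,
      (∑' m : ℤ, Complex.exp (-((Real.pi : ℂ) / (2 * (a:ℂ))) * ((m : ℂ) + w) ^ 2))
      = ((Real.sqrt (2 * a) : ℝ) : ℂ) *
        ∑' k : ℤ, Complex.exp (-(Real.pi : ℂ) * (2 * (a:ℂ)) * (k : ℂ) ^ 2 +
          2 * (Real.pi : ℂ) * (-Complex.I * w) * (k : ℂ)) := by
    intro w
    have h := Complex.tsum_exp_neg_quadratic (a := 2 * (a:ℂ))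
      (by simpa using h2a) (-Complex.I * w)
    have hiw : ∀ m : ℤ, -(Real.pi:ℂ) / (2 * (a:ℂ)) * ((m:ℂ) + Complex.I * (-Complex.I * w)) ^ 2
        = -((Real.pi : ℂ) / (2 * (a:ℂ))) * ((m : ℂ) + w) ^ 2 := by
      intro m
      rw [show Complex.I * (-Complex.I * w) = -(Complex.I * Complex.I) * w by ring,
        Complex.I_mul_I]
      ring
    simp only [hiw, hpow] at h
    rw [h, ← mul_assoc, mul_one_div, div_self hsqrt0, one_mul]
  -- step 3: identity for the outer sum terms
  have id3 : ∀ n k : ℤ,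
      Complex.exp (-(Real.pi : ℂ) * (2 * (a:ℂ)) * (k : ℂ) ^ 2 +
          2 * (Real.pi : ℂ) * (-Complex.I * c n) * (k : ℂ)) * Complex.exp (L n)
      = F (-k) * H (n + k) := by
    intro n k
    simp only [hF, hH, hc, hL, ← Complex.exp_add]
    congr 1
    rw [hτσ]
    push_cast
    linear_combination (-2 * (Real.pi:ℂ) * (a:ℂ) * (k:ℂ)^2) * Complex.I_sq
  -- summability of F and H
  have hFe : ∀ k : ℤ, jacobiTheta₂_term k u τ = F k := by
    intro k
    simp only [jacobiTheta₂_term, hF, ← Complex.exp_add]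
    congr 1
    ring
  have hHe : ∀ l : ℤ, jacobiTheta₂_term l v (-σ) = H l := by
    intro l
    simp only [jacobiTheta₂_term, hH, ← Complex.exp_add]
    congr 1
    ring
  have himτ : 0 < τ.im := by rw [hτim]; exact ha
  have himσ : 0 < (-σ).im := by simp [hσim, ha]
  have hFs : Summable F := ((summable_jacobiTheta₂_term_iff u τ).mpr himτ).congr hFe
  have hHs : Summable H := ((summable_jacobiTheta₂_term_iff v (-σ)).mpr himσ).congr hHe
  have hFn : Summable fun k : ℤ => ‖F k‖ :=
    (my_summable_norm_jtt u τ himτ).congr fun k => by rw [hFe k]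
  have hHn : Summable fun l : ℤ => ‖H l‖ :=
    (my_summable_norm_jtt v (-σ) himσ).congr fun l => by rw [hHe l]
  have hFHn : Summable (fun p : ℤ × ℤ => F p.1 * H p.2) := by
    apply Summable.of_norm
    simp only [norm_mul]
    exact hFn.mul_of_nonneg hHn (fun _ => norm_nonneg _) (fun _ => norm_nonneg _)
  -- norm of the double theta term
  have hnorm : ∀ m n : ℤ, ‖doubleThetaTerm a τ u v m n‖
      = Real.exp ((L n).re + Real.pi / (2 * a) * (c n).im ^ 2) *
        Real.exp (-(Real.pi / (2 * a)) * ((m : ℝ) + (c n).re) ^ 2) := by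
    intro m n
    rw [id1 m n]
    exact my_norm_exp_sq a (c n) m (L n)
  -- uniform bound for the Gaussian theta sum
  have hKs : Summable fun k : ℤ => Real.exp (-(2 * Real.pi * a) * (k:ℝ)^2) := by
    refine (my_summable_exp_quadratic (by positivity : (0:ℝ) < 2 * Real.pi * a) 0 0).congr
      fun k => ?_
    congr 1; ring
  set K : ℝ := Real.sqrt (2 * a) * ∑' k : ℤ, Real.exp (-(2 * Real.pi * a) * (k:ℝ)^2) with hK
  have hS0 : ∀ x : ℝ,
      (∑' m : ℤ, Real.exp (-(Real.pi / (2 * a)) * ((m:ℝ) + x) ^ 2)) ≤ K := by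
    intro x
    have hcast : ((∑' m : ℤ, Real.exp (-(Real.pi / (2 * a)) * ((m:ℝ) + x) ^ 2) : ℝ) : ℂ)
        = ∑' m : ℤ, Complex.exp (-((Real.pi:ℂ) / (2 * (a:ℂ))) * ((m:ℂ) + (x:ℂ)) ^ 2) := by
      rw [Complex.ofReal_tsum]
      exact tsum_congr fun m => by rw [Complex.ofReal_exp]; congr 1; push_cast; ring
    have h1 : (∑' m : ℤ, Real.exp (-(Real.pi / (2 * a)) * ((m:ℝ) + x) ^ 2))
        = ‖((∑' m : ℤ, Real.exp (-(Real.pi / (2 * a)) * ((m:ℝ) + x) ^ 2) : ℝ) : ℂ)‖ := by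
      rw [Complex.norm_real, Real.norm_eq_abs,
        _root_.abs_of_nonneg (tsum_nonneg fun m => (Real.exp_pos _).le)]
    rw [h1, hcast, poisson ((x:ℝ) : ℂ)]
    have hsn : Summable fun k : ℤ => ‖Complex.exp (-(Real.pi:ℂ) * (2 * (a:ℂ)) * (k:ℂ)^2 +
        2 * (Real.pi:ℂ) * (-Complex.I * ((x:ℝ):ℂ)) * (k:ℂ))‖ :=
      hKs.congr fun k => (my_norm_exp_quad a x k).symm
    calc ‖((Real.sqrt (2*a) : ℝ) : ℂ) * ∑' k : ℤ, Complex.exp (-(Real.pi:ℂ) * (2 * (a:ℂ)) * (k:ℂ)^2 +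
          2 * (Real.pi:ℂ) * (-Complex.I * ((x:ℝ):ℂ)) * (k:ℂ))‖
        = Real.sqrt (2*a) * ‖∑' k : ℤ, Complex.exp (-(Real.pi:ℂ) * (2 * (a:ℂ)) * (k:ℂ)^2 +
          2 * (Real.pi:ℂ) * (-Complex.I * ((x:ℝ):ℂ)) * (k:ℂ))‖ := by
          rw [norm_mul, Complex.norm_real, Real.norm_eq_abs,
            _root_.abs_of_nonneg (Real.sqrt_nonneg _)]
      _ ≤ Real.sqrt (2*a) * ∑' k : ℤ, ‖Complex.exp (-(Real.pi:ℂ) * (2 * (a:ℂ)) * (k:ℂ)^2 +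
          2 * (Real.pi:ℂ) * (-Complex.I * ((x:ℝ):ℂ)) * (k:ℂ))‖ :=
          mul_le_mul_of_nonneg_left (norm_tsum_le_tsum_norm hsn) (Real.sqrt_nonneg _)
      _ = K := by rw [hK]; congr 1; exact tsum_congr fun k => my_norm_exp_quad a x k
  -- fiberwise summability and bound
  have hfibs : ∀ n : ℤ, Summable fun m : ℤ => ‖doubleThetaTerm a τ u v m n‖ := fun n =>
    ((my_summable_gauss (c := Real.pi / (2 * a)) (by positivity) (c n).re).mul_left
      (Real.exp ((L n).re + Real.pi / (2 * a) * (c n).im ^ 2))).congr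
      fun m => (hnorm m n).symm
  have hfibtsum : ∀ n : ℤ, (∑' m : ℤ, ‖doubleThetaTerm a τ u v m n‖)
      = Real.exp ((L n).re + Real.pi / (2 * a) * (c n).im ^ 2) *
        ∑' m : ℤ, Real.exp (-(Real.pi / (2 * a)) * ((m:ℝ) + (c n).re) ^ 2) := by
    intro n
    rw [← tsum_mul_left]
    exact tsum_congr fun m => hnorm m n
  have hquad : ∀ n : ℤ, (L n).re + Real.pi / (2 * a) * (c n).im ^ 2
      = -(Real.pi * a / 2) * (n:ℝ)^2 + (-(Real.pi * (u.im - v.im)) - 2 * Real.pi * v.im) * n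
        + Real.pi / (2 * a) * (u.im - v.im)^2 := by
    intro n
    have h1 : (L n).re = -(Real.pi * a) * (n:ℝ)^2 - 2 * Real.pi * v.im * (n:ℝ) := by
      simp only [hL]
      simp [pow_two, Complex.add_re, Complex.mul_re, Complex.mul_im, Complex.intCast_re,
        Complex.intCast_im, hσim]
      ring
    have h2 : (c n).im = -a * (n:ℝ) + (u.im - v.im) := by
      simp only [hc]
      simp [Complex.sub_im, Complex.add_im, Complex.mul_im, Complex.intCast_re,
        Complex.intCast_im, hσim]
      ring
    rw [h1, h2]
    field_simp
    ring
  have hover : Summable fun n : ℤ => ∑' m : ℤ, ‖doubleThetaTerm a τ u v m n‖ := by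
    have hbs : Summable fun n : ℤ =>
        Real.exp (-(Real.pi * a / 2) * (n:ℝ)^2 +
          (-(Real.pi * (u.im - v.im)) - 2 * Real.pi * v.im) * n
          + Real.pi / (2 * a) * (u.im - v.im)^2) * K :=
      (my_summable_exp_quadratic (by positivity) _ _).mul_right K
    refine hbs.of_nonneg_of_le (fun n => tsum_nonneg fun m => norm_nonneg _) fun n => ?_
    rw [hfibtsum n, hquad n]
    exact mul_le_mul_of_nonneg_left (hS0 _) (Real.exp_pos _).le
  -- summability of the double sum
  have hns : Summable fun q : ℤ × ℤ => ‖doubleThetaTerm a τ u v q.2 q.1‖ :=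
    (summable_prod_of_nonneg (fun _ => norm_nonneg _)).mpr ⟨fun n => hfibs n, hover⟩
  have hsum : Summable fun p : ℤ × ℤ => doubleThetaTerm a τ u v p.1 p.2 := by
    apply Summable.of_norm
    exact (Equiv.prodComm ℤ ℤ).summable_iff.mpr hns
  have hswap : Summable fun q : ℤ × ℤ => doubleThetaTerm a τ u v q.2 q.1 :=
    (Equiv.prodComm ℤ ℤ).summable_iff.mpr hsum
  -- reindexed product sum
  have hG : Summable fun q : ℤ × ℤ => F (-q.2) * H (q.1 + q.2) :=
    zzEquiv.symm.summable_iff.mpr hFHn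
  have hGtsum : (∑' q : ℤ × ℤ, F (-q.2) * H (q.1 + q.2)) = (∑' k, F k) * (∑' l, H l) := by
    calc (∑' q : ℤ × ℤ, F (-q.2) * H (q.1 + q.2))
        = ∑' p : ℤ × ℤ, F p.1 * H p.2 := zzEquiv.symm.tsum_eq (fun p : ℤ × ℤ => F p.1 * H p.2)
      _ = ∑' k : ℤ, ∑' l : ℤ, F k * H l := Summable.tsum_prod hFHn
      _ = (∑' k, F k) * (∑' l, H l) := by
          simp only [tsum_mul_left, tsum_mul_right]
  have stepn : ∀ n : ℤ, (∑' m : ℤ, doubleThetaTerm a τ u v m n)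
      = ((Real.sqrt (2 * a) : ℝ) : ℂ) * ∑' k : ℤ, F (-k) * H (n + k) := by
    intro n
    calc (∑' m : ℤ, doubleThetaTerm a τ u v m n)
        = ∑' m : ℤ, Complex.exp (-((Real.pi : ℂ) / (2 * (a:ℂ))) * ((m : ℂ) + c n) ^ 2) *
            Complex.exp (L n) := tsum_congr fun m => id1 m n
      _ = (∑' m : ℤ, Complex.exp (-((Real.pi : ℂ) / (2 * (a:ℂ))) * ((m : ℂ) + c n) ^ 2)) *
            Complex.exp (L n) := tsum_mul_right
      _ = (((Real.sqrt (2 * a) : ℝ) : ℂ) *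
            ∑' k : ℤ, Complex.exp (-(Real.pi : ℂ) * (2 * (a:ℂ)) * (k : ℂ) ^ 2 +
              2 * (Real.pi : ℂ) * (-Complex.I * c n) * (k : ℂ))) * Complex.exp (L n) := by
            rw [poisson (c n)]
      _ = ((Real.sqrt (2 * a) : ℝ) : ℂ) *
            ∑' k : ℤ, Complex.exp (-(Real.pi : ℂ) * (2 * (a:ℂ)) * (k : ℂ) ^ 2 +
              2 * (Real.pi : ℂ) * (-Complex.I * c n) * (k : ℂ)) * Complex.exp (L n) := by
            rw [mul_assoc, ← tsum_mul_right]
      _ = ((Real.sqrt (2 * a) : ℝ) : ℂ) * ∑' k : ℤ, F (-k) * H (n + k) := by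
            exact congrArg _ (tsum_congr fun k => id3 n k)
  refine ⟨hsum, hFs, hHs, ?_⟩
  calc (∑' p : ℤ × ℤ, doubleThetaTerm a τ u v p.1 p.2)
      = ∑' q : ℤ × ℤ, doubleThetaTerm a τ u v q.2 q.1 :=
        ((Equiv.prodComm ℤ ℤ).tsum_eq (fun q : ℤ × ℤ => doubleThetaTerm a τ u v q.2 q.1))
    _ = ∑' n : ℤ, ∑' m : ℤ, doubleThetaTerm a τ u v m n := Summable.tsum_prod hswap
    _ = ∑' n : ℤ, ((Real.sqrt (2 * a) : ℝ) : ℂ) * ∑' k : ℤ, F (-k) * H (n + k) :=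
        tsum_congr stepn
    _ = ((Real.sqrt (2 * a) : ℝ) : ℂ) * ∑' n : ℤ, ∑' k : ℤ, F (-k) * H (n + k) := tsum_mul_left
    _ = ((Real.sqrt (2 * a) : ℝ) : ℂ) * ∑' q : ℤ × ℤ, F (-q.2) * H (q.1 + q.2) := by
        exact congrArg _ (Summable.tsum_prod hG).symm
    _ = ((Real.sqrt (2 * a) : ℝ) : ℂ) * ((∑' k, F k) * (∑' l, H l)) := by rw [hGtsum]
    _ = ((Real.sqrt (2 * a) : ℝ) : ℂ) * (∑' k, F k) * (∑' l, H l) := by rw [mul_assoc]
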